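/- Let m ≥ 1, let α₁, …, α_m ∈ (0, π), and let r₀, r₁, …, r_m > 0 and ρ₀, ρ₁, …, ρ_m > 0 satisfy the closing conditions ∑_{j=1}^m f_{α_j}(log r_j − log r₀) = π and ∑_{j=1}^m f_{α_j}(log ρ_j − log ρ₀) = π. Assume r_j ≥ r₀·cos α_j and ρ_j ≥ ρ₀·cos α_j for all j, and set c_j = sin α_j / ((ρ_j/ρ₀) + (ρ₀/ρ_j) − 2·cos α_j). Then ∑_{j=1}^m c_j·(r_j/ρ_j) ≥ (r₀/ρ₀)·∑_{j=1}^m c_j. If moreover ∑_{j=1}^m (π − α_j) = 2π and additionally r₀ ≥ r_j·cos α_j and ρ₀ ≥ ρ_j·cos α_j for all j, then also ∑_{j=1}^m c_j·(ρ_j/r_j) ≥ (ρ₀/r₀)·∑_{j=1}^m c_j. -/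

import Mathlib

/-- The function `f_θ(x) = −arg(1 − exp(x + iθ))`, realizing the paper's
`f_θ(x) = (1/(2i))·log((1 − e^{x−iθ})/(1 − e^{x+iθ}))` with the branch of the
logarithm chosen so that `0 < f_θ < π`. -/
noncomputable def fAngle (θ x : ℝ) : ℝ :=
  -Complex.arg (1 - Complex.exp (x + θ * Complex.I))

namespace SubharmonicityAux

open Real

/-- The real form of `fAngle θ (log t)` as a function of `t`. -/
noncomputable def Gfun (θ t : ℝ) : ℝ :=
  Real.pi / 2 - Real.arctan ((t⁻¹ - Real.cos θ) / Real.sin θ)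

lemma arg_add_mul_I_of_im_neg {x y : ℝ} (hy : y < 0) :
    Complex.arg ((x : ℂ) + (y : ℂ) * Complex.I) = Real.arctan (x / (-y)) - Real.pi / 2 := by
  have hy' : (0:ℝ) < -y := by linarith
  have hR : 0 < Real.sqrt (x ^ 2 + y ^ 2) := Real.sqrt_pos.2 (by nlinarith)
  set u := x / (-y) with hu
  have hφ : Real.arctan u - Real.pi / 2 ∈ Set.Ioc (-Real.pi) Real.pi := by
    constructor
    · nlinarith [Real.neg_pi_div_two_lt_arctan u, Real.pi_pos]
    · nlinarith [Real.arctan_lt_pi_div_two u, Real.pi_pos]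
  have hsq : Real.sqrt (1 + u ^ 2) = Real.sqrt (x ^ 2 + y ^ 2) / (-y) := by
    rw [eq_div_iff hy'.ne', show -y = Real.sqrt ((-y) ^ 2) by rw [Real.sqrt_sq hy'.le],
      ← Real.sqrt_mul (by positivity)]
    congr 1
    field_simp [hu, hy.ne]
    rw [hu, div_pow, neg_sq, add_mul, one_mul, div_mul_cancel₀ _ (pow_ne_zero 2 hy.ne)]
    ring
  have hcos : Real.cos (Real.arctan u - Real.pi / 2) = x / Real.sqrt (x ^ 2 + y ^ 2) := by
    rw [Real.cos_sub_pi_div_two, Real.sin_arctan, hsq, hu]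
    rw [div_div_div_eq]
    field_simp [hR.ne', hy.ne]
  have hsin : Real.sin (Real.arctan u - Real.pi / 2) = y / Real.sqrt (x ^ 2 + y ^ 2) := by
    rw [Real.sin_sub_pi_div_two, Real.cos_arctan, hsq]
    field_simp
  have key : (x : ℂ) + (y : ℂ) * Complex.I =
      (Real.sqrt (x ^ 2 + y ^ 2) : ℂ) *
        (Complex.cos ((Real.arctan u - Real.pi / 2 : ℝ) : ℂ) +
          Complex.sin ((Real.arctan u - Real.pi / 2 : ℝ) : ℂ) * Complex.I) := by
    rw [← Complex.ofReal_cos, ← Complex.ofReal_sin, hcos, hsin]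
    simp only [Complex.ext_iff, Complex.add_re, Complex.add_im, Complex.mul_re, Complex.mul_im,
      Complex.ofReal_re, Complex.ofReal_im, Complex.I_re, Complex.I_im]
    constructor <;> · field_simp <;> ring
  rw [key, Complex.arg_mul_cos_add_sin_mul_I hR hφ]

lemma exp_decomp (θ x : ℝ) :
    Complex.exp (x + θ * Complex.I) =
      (Real.exp x * Real.cos θ : ℝ) + (Real.exp x * Real.sin θ : ℝ) * Complex.I := by
  rw [Complex.exp_add, Complex.exp_mul_I]
  push_cast [← Complex.ofReal_exp, ← Complex.ofReal_cos, ← Complex.ofReal_sin]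
  ring

lemma one_sub_exp (θ x : ℝ) :
    (1 : ℂ) - Complex.exp (x + θ * Complex.I) =
      ((1 - Real.exp x * Real.cos θ : ℝ) : ℂ) +
        ((-(Real.exp x * Real.sin θ) : ℝ) : ℂ) * Complex.I := by
  rw [exp_decomp]
  push_cast
  ring

lemma fAngle_eq_G {θ t : ℝ} (hθ1 : 0 < θ) (hθ2 : θ < Real.pi) (ht : 0 < t) :
    fAngle θ (Real.log t) = Gfun θ t := by
  have hsin : 0 < Real.sin θ := Real.sin_pos_of_pos_of_lt_pi hθ1 hθ2
  have hexp : Real.exp (Real.log t) = t := Real.exp_log ht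
  rw [fAngle, one_sub_exp, arg_add_mul_I_of_im_neg (by rw [hexp]; nlinarith)]
  rw [Gfun, hexp]
  have : (1 - t * Real.cos θ) / - -(t * Real.sin θ) = (t⁻¹ - Real.cos θ) / Real.sin θ := by
    rw [neg_neg]
    field_simp
  rw [this]
  ring

lemma Gfun_hasDerivAt {θ t : ℝ} (hsin : 0 < Real.sin θ) (ht : 0 < t) :
    HasDerivAt (Gfun θ) (Real.sin θ / (t ^ 2 - 2 * t * Real.cos θ + 1)) t := by
  have hq : 0 < t ^ 2 - 2 * t * Real.cos θ + 1 := by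
    nlinarith [Real.sin_sq_add_cos_sq θ, sq_nonneg (t - Real.cos θ)]
  have h1 : HasDerivAt (fun s : ℝ => (s⁻¹ - Real.cos θ) / Real.sin θ)
      (-(t ^ 2)⁻¹ / Real.sin θ) t := by
    exact ((hasDerivAt_inv ht.ne').sub_const _).div_const _
  have h2 := (Real.hasDerivAt_arctan ((t⁻¹ - Real.cos θ) / Real.sin θ)).comp t h1
  have h3 := (hasDerivAt_const t (Real.pi / 2)).sub h2
  convert h3 using 1
  all_goals try rfl
  rw [zero_sub]
  have h4 : 1 + ((t⁻¹ - Real.cos θ) / Real.sin θ) ^ 2 > 0 := by positivity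
  field_simp
  rw [div_eq_one_iff_eq (by nlinarith)]
  linear_combination (Real.sin_sq_add_cos_sq θ) * t ^ 2

lemma qpos {θ t : ℝ} (hsin : 0 < Real.sin θ) :
    0 < t ^ 2 - 2 * t * Real.cos θ + 1 := by
  nlinarith [Real.sin_sq_add_cos_sq θ, sq_nonneg (t - Real.cos θ)]

lemma qmono {θ a b : ℝ} (hc : Real.cos θ ≤ a) (hab : a ≤ b) :
    a ^ 2 - 2 * a * Real.cos θ + 1 ≤ b ^ 2 - 2 * b * Real.cos θ + 1 := by
  nlinarith

/-- The tangent-line inequality for the concave function `t ↦ Gfun θ t` on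
the region `t ≥ cos θ`. -/
lemma Gfun_tangent {θ s t : ℝ} (hsin : 0 < Real.sin θ) (hs : 0 < s) (ht : 0 < t)
    (hcs : Real.cos θ ≤ s) (hct : Real.cos θ ≤ t) :
    Gfun θ s - Gfun θ t ≤ Real.sin θ / (t ^ 2 - 2 * t * Real.cos θ + 1) * (s - t) := by
  rcases lt_trichotomy s t with h | h | h
  · obtain ⟨x, hx, hx2⟩ := exists_hasDerivAt_eq_slope (Gfun θ)
      (fun x => Real.sin θ / (x ^ 2 - 2 * x * Real.cos θ + 1)) h
      (fun x hx => (Gfun_hasDerivAt hsin (lt_of_lt_of_le hs hx.1)).continuousAt.continuousWithinAt)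
      (fun x hx => Gfun_hasDerivAt hsin (lt_trans hs hx.1))
    have hqx : 0 < x ^ 2 - 2 * x * Real.cos θ + 1 := qpos hsin
    have hqt : 0 < t ^ 2 - 2 * t * Real.cos θ + 1 := qpos hsin
    have hmono : x ^ 2 - 2 * x * Real.cos θ + 1 ≤ t ^ 2 - 2 * t * Real.cos θ + 1 :=
      qmono (le_trans hcs hx.1.le) hx.2.le
    have h1 : Real.sin θ / (t ^ 2 - 2 * t * Real.cos θ + 1) ≤
        Real.sin θ / (x ^ 2 - 2 * x * Real.cos θ + 1) :=
      div_le_div_of_nonneg_left hsin.le hqx hmono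
    have h2 : Gfun θ t - Gfun θ s =
        Real.sin θ / (x ^ 2 - 2 * x * Real.cos θ + 1) * (t - s) := by
      rw [hx2, div_mul_cancel₀ _ (by linarith : t - s ≠ 0)]
    have hts : 0 < t - s := by linarith
    nlinarith
  · simp [h]
  · obtain ⟨x, hx, hx2⟩ := exists_hasDerivAt_eq_slope (Gfun θ)
      (fun x => Real.sin θ / (x ^ 2 - 2 * x * Real.cos θ + 1)) h
      (fun x hx => (Gfun_hasDerivAt hsin (lt_of_lt_of_le ht hx.1)).continuousAt.continuousWithinAt)
      (fun x hx => Gfun_hasDerivAt hsin (lt_trans ht hx.1))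
    have hqx : 0 < x ^ 2 - 2 * x * Real.cos θ + 1 := qpos hsin
    have hqt : 0 < t ^ 2 - 2 * t * Real.cos θ + 1 := qpos hsin
    have hmono : t ^ 2 - 2 * t * Real.cos θ + 1 ≤ x ^ 2 - 2 * x * Real.cos θ + 1 :=
      qmono hct hx.1.le
    have h1 : Real.sin θ / (x ^ 2 - 2 * x * Real.cos θ + 1) ≤
        Real.sin θ / (t ^ 2 - 2 * t * Real.cos θ + 1) :=
      div_le_div_of_nonneg_left hsin.le hqt hmono
    have h2 : Gfun θ s - Gfun θ t =
        Real.sin θ / (x ^ 2 - 2 * x * Real.cos θ + 1) * (s - t) := by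
      rw [hx2, div_mul_cancel₀ _ (by linarith : s - t ≠ 0)]
    have hts : 0 < s - t := by linarith
    nlinarith

lemma im_one_sub_exp_neg {θ x : ℝ} (hsin : 0 < Real.sin θ) :
    ((1 : ℂ) - Complex.exp (x + θ * Complex.I)).im < 0 := by
  have : ((1 : ℂ) - Complex.exp (x + θ * Complex.I)).im = -(Real.exp x * Real.sin θ) := by
    rw [Complex.sub_im, Complex.one_im, Complex.exp_im]
    simp [Complex.add_re, Complex.add_im, Complex.ofReal_re, Complex.ofReal_im,
      Complex.mul_re, Complex.mul_im, Complex.I_re, Complex.I_im]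
  rw [this]
  have := Real.exp_pos x
  nlinarith

/-- The symmetry `f_θ(x) + f_θ(−x) = π − θ`. -/
lemma fAngle_symm {θ x : ℝ} (hθ1 : 0 < θ) (hθ2 : θ < Real.pi) :
    fAngle θ x + fAngle θ (-x) = Real.pi - θ := by
  have hsin : 0 < Real.sin θ := Real.sin_pos_of_pos_of_lt_pi hθ1 hθ2
  have hcos : Real.cos θ < 1 := by
    nlinarith [Real.sin_sq_add_cos_sq θ, Real.neg_one_le_cos θ]
  rw [fAngle, fAngle]
  set z₁ : ℂ := 1 - Complex.exp ((x:ℝ) + θ * Complex.I) with hz₁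
  set z₂ : ℂ := 1 - Complex.exp ((-x:ℝ) + θ * Complex.I) with hz₂
  have him₁ : z₁.im < 0 := im_one_sub_exp_neg hsin
  have him₂ : z₂.im < 0 := im_one_sub_exp_neg hsin
  have hz₁0 : z₁ ≠ 0 := fun h => by simp [h] at him₁
  have hz₂0 : z₂ ≠ 0 := fun h => by simp [h] at him₂
  have hmul : Real.exp x * Real.exp (-x) = 1 := by rw [← Real.exp_add]; simp
  have hc : 0 < Real.exp x + Real.exp (-x) - 2 * Real.cos θ := by
    nlinarith [sq_nonneg (Real.exp x - 1), Real.exp_pos x, Real.exp_pos (-x)]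
  have hprod : z₁ * z₂ = ((Real.exp x + Real.exp (-x) - 2 * Real.cos θ : ℝ) : ℂ) *
      (Complex.cos ((θ - Real.pi : ℝ) : ℂ) + Complex.sin ((θ - Real.pi : ℝ) : ℂ) * Complex.I) := by
    have hrot : Complex.cos ((θ - Real.pi : ℝ) : ℂ) +
        Complex.sin ((θ - Real.pi : ℝ) : ℂ) * Complex.I
        = -Complex.exp ((θ : ℂ) * Complex.I) := by
      rw [Complex.cos_add_sin_I]
      push_cast
      rw [sub_mul, Complex.exp_sub, Complex.exp_pi_mul_I]
      ring
    have h2 : 2 * Complex.cos ((θ : ℝ) : ℂ) * Complex.exp ((θ : ℂ) * Complex.I)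
        = Complex.exp ((θ : ℂ) * Complex.I) ^ 2 + 1 := by
      rw [Complex.cos]
      have hEE : Complex.exp (-((θ : ℂ) * Complex.I)) * Complex.exp ((θ : ℂ) * Complex.I) = 1 := by
        rw [← Complex.exp_add, neg_add_cancel, Complex.exp_zero]
      field_simp
      linear_combination hEE
    rw [hrot, hz₁, hz₂]
    rw [Complex.exp_add, Complex.exp_add]
    have hab : Complex.exp (x : ℂ) * Complex.exp (-(x : ℂ)) = 1 := by
      rw [← Complex.exp_add, add_neg_cancel, Complex.exp_zero]
    push_cast
    linear_combination (Complex.exp ((θ:ℂ) * Complex.I)) ^ 2 * hab - h2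
  have hargp : Complex.arg (z₁ * z₂) = θ - Real.pi := by
    have hπ := Real.pi_pos
    rw [hprod, Complex.arg_mul_cos_add_sin_mul_I hc ⟨by linarith, by linarith⟩]
  have hangle := Complex.arg_mul_coe_angle hz₁0 hz₂0
  rw [hargp] at hangle
  have hthis : ((θ - Real.pi : ℝ) : Real.Angle) =
      ((Complex.arg z₁ + Complex.arg z₂ : ℝ) : Real.Angle) := by
    rw [hangle, Real.Angle.coe_add]
  obtain ⟨k, hk⟩ := Real.Angle.angle_eq_iff_two_pi_dvd_sub.mp hthis
  have hb₁ : -Real.pi < Complex.arg z₁ := Complex.neg_pi_lt_arg z₁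
  have hb₂ : -Real.pi < Complex.arg z₂ := Complex.neg_pi_lt_arg z₂
  have hb₁' : Complex.arg z₁ < 0 := Complex.arg_neg_iff.mpr him₁
  have hb₂' : Complex.arg z₂ < 0 := Complex.arg_neg_iff.mpr him₂
  have hπ := Real.pi_pos
  have h1 : (-1 : ℝ) < (k : ℝ) := by nlinarith
  have h2 : ((k : ℝ)) < 1 := by nlinarith
  have hk0 : k = 0 := by
    have h1' : (-1 : ℤ) < k := by exact_mod_cast h1
    have h2' : k < (1 : ℤ) := by exact_mod_cast h2
    omega
  rw [hk0] at hk
  push_cast at hk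
  linarith

/-- The core summation inequality coming from concavity and the equality of
the two closing sums. -/
lemma core_sum {m : ℕ} (α s t : Fin m → ℝ) (hα : ∀ j, 0 < Real.sin (α j))
    (hs : ∀ j, 0 < s j) (ht : ∀ j, 0 < t j)
    (hcs : ∀ j, Real.cos (α j) ≤ s j) (hct : ∀ j, Real.cos (α j) ≤ t j)
    (hsum : ∑ j, Gfun (α j) (s j) = ∑ j, Gfun (α j) (t j)) :
    0 ≤ ∑ j, Real.sin (α j) / ((t j) ^ 2 - 2 * t j * Real.cos (α j) + 1) * (s j - t j) := by
  have h := Finset.sum_le_sum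
    (fun j (_ : j ∈ Finset.univ) => Gfun_tangent (hα j) (hs j) (ht j) (hcs j) (hct j))
  calc (0:ℝ) = ∑ j, (Gfun (α j) (s j) - Gfun (α j) (t j)) := by
        rw [Finset.sum_sub_distrib, hsum, sub_self]
    _ ≤ _ := h


lemma coeff_id {θ s t K : ℝ} (ht : 0 < t) (hd : 0 < t + 1 / t - 2 * Real.cos θ) :
    Real.sin θ / (t + 1 / t - 2 * Real.cos θ) * (K * (s / t)) -
      K * (Real.sin θ / (t + 1 / t - 2 * Real.cos θ)) =
    K * (Real.sin θ / (t ^ 2 - 2 * t * Real.cos θ + 1) * (s - t)) := by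
  have hq : t ^ 2 - 2 * t * Real.cos θ + 1 = t * (t + 1 / t - 2 * Real.cos θ) := by
    field_simp
    ring
  have hq2 : (0:ℝ) < t ^ 2 - 2 * t * Real.cos θ + 1 := by rw [hq]; positivity
  have h3 : (1:ℝ) - t * Real.cos θ * 2 + t ^ 2 ≠ 0 := by nlinarith
  have h4 : t - t ^ 2 * Real.cos θ * 2 + t ^ 3 ≠ 0 := by nlinarith
  rw [hq]
  field_simp [h3, h4]

end SubharmonicityAux

open SubharmonicityAux in
theorem subharmonicity_general (m : ℕ) (hm : 1 ≤ m)
    (α : Fin m → ℝ) (hα : ∀ j, 0 < α j ∧ α j < Real.pi)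
    (r ρ : Fin m → ℝ) (r₀ ρ₀ : ℝ)
    (hr₀ : 0 < r₀) (hρ₀ : 0 < ρ₀) (hr : ∀ j, 0 < r j) (hρ : ∀ j, 0 < ρ j)
    (hcloser : ∑ j, fAngle (α j) (Real.log (r j) - Real.log r₀) = Real.pi)
    (hcloseρ : ∑ j, fAngle (α j) (Real.log (ρ j) - Real.log ρ₀) = Real.pi)
    (hconvr : ∀ j, r₀ * Real.cos (α j) ≤ r j)
    (hconvρ : ∀ j, ρ₀ * Real.cos (α j) ≤ ρ j)
    (c : Fin m → ℝ)
    (hc : ∀ j, c j = Real.sin (α j) / (ρ j / ρ₀ + ρ₀ / ρ j - 2 * Real.cos (α j))) :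
    (∑ j, c j * (r j / ρ j) ≥ r₀ / ρ₀ * ∑ j, c j) ∧
    ((∑ j, (Real.pi - α j) = 2 * Real.pi) →
      (∀ j, r j * Real.cos (α j) ≤ r₀) → (∀ j, ρ j * Real.cos (α j) ≤ ρ₀) →
      ∑ j, c j * (ρ j / r j) ≥ ρ₀ / r₀ * ∑ j, c j) := by
  have hsin : ∀ j, 0 < Real.sin (α j) :=
    fun j => Real.sin_pos_of_pos_of_lt_pi (hα j).1 (hα j).2
  have hcos1 : ∀ j, Real.cos (α j) < 1 := by
    intro j
    nlinarith [Real.sin_sq_add_cos_sq (α j), Real.neg_one_le_cos (α j), hsin j]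
  have hdpos : ∀ j, 0 < ρ j / ρ₀ + ρ₀ / ρ j - 2 * Real.cos (α j) := by
    intro j
    have h1 : 2 ≤ ρ j / ρ₀ + ρ₀ / ρ j := by
      rw [div_add_div _ _ hρ₀.ne' (hρ j).ne', le_div_iff₀ (mul_pos hρ₀ (hρ j))]
      nlinarith [sq_nonneg (ρ j - ρ₀)]
    nlinarith [hcos1 j]
  have hGr : ∀ j, fAngle (α j) (Real.log (r j) - Real.log r₀) = Gfun (α j) (r j / r₀) := by
    intro j
    rw [← Real.log_div (hr j).ne' hr₀.ne',
      fAngle_eq_G (hα j).1 (hα j).2 (div_pos (hr j) hr₀)]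
  have hGρ : ∀ j, fAngle (α j) (Real.log (ρ j) - Real.log ρ₀) = Gfun (α j) (ρ j / ρ₀) := by
    intro j
    rw [← Real.log_div (hρ j).ne' hρ₀.ne',
      fAngle_eq_G (hα j).1 (hα j).2 (div_pos (hρ j) hρ₀)]
  have hsr : ∑ j, Gfun (α j) (r j / r₀) = Real.pi := by
    rw [← hcloser]; exact Finset.sum_congr rfl fun j _ => (hGr j).symm
  have hsρ : ∑ j, Gfun (α j) (ρ j / ρ₀) = Real.pi := by
    rw [← hcloseρ]; exact Finset.sum_congr rfl fun j _ => (hGρ j).symm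
  constructor
  · -- first part
    have hcore := core_sum α (fun j => r j / r₀) (fun j => ρ j / ρ₀) hsin
      (fun j => div_pos (hr j) hr₀) (fun j => div_pos (hρ j) hρ₀)
      (fun j => by
        show Real.cos (α j) ≤ r j / r₀
        rw [le_div_iff₀ hr₀]; linarith [hconvr j])
      (fun j => by
        show Real.cos (α j) ≤ ρ j / ρ₀
        rw [le_div_iff₀ hρ₀]; linarith [hconvρ j])
      (hsr.trans hsρ.symm)
    have key : ∀ j, c j * (r j / ρ j) - r₀ / ρ₀ * c j =
        (r₀ / ρ₀) * (Real.sin (α j) /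
          ((ρ j / ρ₀) ^ 2 - 2 * (ρ j / ρ₀) * Real.cos (α j) + 1) * (r j / r₀ - ρ j / ρ₀)) := by
      intro j
      have ht : 0 < ρ j / ρ₀ := div_pos (hρ j) hρ₀
      have hd' : 0 < ρ j / ρ₀ + 1 / (ρ j / ρ₀) - 2 * Real.cos (α j) := by
        rw [one_div_div]; exact hdpos j
      have h1 : c j = Real.sin (α j) / (ρ j / ρ₀ + 1 / (ρ j / ρ₀) - 2 * Real.cos (α j)) := by
        rw [hc j, one_div_div]
      have h2 : r j / ρ j = (r₀ / ρ₀) * ((r j / r₀) / (ρ j / ρ₀)) := by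
        rw [div_div_div_eq, div_mul_div_comm,
          div_eq_div_iff (hρ j).ne' (mul_ne_zero hρ₀.ne' (mul_ne_zero hr₀.ne' (hρ j).ne'))]
        ring
      rw [h1, h2]
      exact coeff_id ht hd'
    rw [ge_iff_le, ← sub_nonneg, Finset.mul_sum, ← Finset.sum_sub_distrib]
    calc (0:ℝ) ≤ (r₀ / ρ₀) * ∑ j, Real.sin (α j) /
          ((ρ j / ρ₀) ^ 2 - 2 * (ρ j / ρ₀) * Real.cos (α j) + 1) * (r j / r₀ - ρ j / ρ₀) :=
        mul_nonneg (div_pos hr₀ hρ₀).le hcore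
      _ = ∑ j, (c j * (r j / ρ j) - r₀ / ρ₀ * c j) := by
        rw [Finset.mul_sum]
        exact Finset.sum_congr rfl fun j _ => (key j).symm
  · -- second part
    intro hang hconvr' hconvρ'
    have hsumr' : ∑ j, Gfun (α j) (r₀ / r j) = Real.pi := by
      have he : ∀ j, Gfun (α j) (r₀ / r j) =
          Real.pi - α j - Gfun (α j) (r j / r₀) := by
        intro j
        have h1 := fAngle_symm (θ := α j) (x := Real.log (r j) - Real.log r₀) (hα j).1 (hα j).2
        have h2 : -(Real.log (r j) - Real.log r₀) = Real.log (r₀ / r j) := by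
          rw [Real.log_div hr₀.ne' (hr j).ne']; ring
        rw [h2, hGr j, fAngle_eq_G (hα j).1 (hα j).2 (div_pos hr₀ (hr j))] at h1
        linarith
      rw [Finset.sum_congr rfl fun j _ => he j, Finset.sum_sub_distrib, hsr, hang]
      ring
    have hsumρ' : ∑ j, Gfun (α j) (ρ₀ / ρ j) = Real.pi := by
      have he : ∀ j, Gfun (α j) (ρ₀ / ρ j) =
          Real.pi - α j - Gfun (α j) (ρ j / ρ₀) := by
        intro j
        have h1 := fAngle_symm (θ := α j) (x := Real.log (ρ j) - Real.log ρ₀) (hα j).1 (hα j).2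
        have h2 : -(Real.log (ρ j) - Real.log ρ₀) = Real.log (ρ₀ / ρ j) := by
          rw [Real.log_div hρ₀.ne' (hρ j).ne']; ring
        rw [h2, hGρ j, fAngle_eq_G (hα j).1 (hα j).2 (div_pos hρ₀ (hρ j))] at h1
        linarith
      rw [Finset.sum_congr rfl fun j _ => he j, Finset.sum_sub_distrib, hsρ, hang]
      ring
    have hcore := core_sum α (fun j => r₀ / r j) (fun j => ρ₀ / ρ j) hsin
      (fun j => div_pos hr₀ (hr j)) (fun j => div_pos hρ₀ (hρ j))
      (fun j => by
        show Real.cos (α j) ≤ r₀ / r j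
        rw [le_div_iff₀ (hr j)]; linarith [hconvr' j])
      (fun j => by
        show Real.cos (α j) ≤ ρ₀ / ρ j
        rw [le_div_iff₀ (hρ j)]; linarith [hconvρ' j])
      (hsumr'.trans hsumρ'.symm)
    have key : ∀ j, c j * (ρ j / r j) - ρ₀ / r₀ * c j =
        (ρ₀ / r₀) * (Real.sin (α j) /
          ((ρ₀ / ρ j) ^ 2 - 2 * (ρ₀ / ρ j) * Real.cos (α j) + 1) * (r₀ / r j - ρ₀ / ρ j)) := by
      intro j
      have ht : 0 < ρ₀ / ρ j := div_pos hρ₀ (hρ j)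
      have hd' : 0 < ρ₀ / ρ j + 1 / (ρ₀ / ρ j) - 2 * Real.cos (α j) := by
        rw [one_div_div]; linarith [hdpos j]
      have h1 : c j = Real.sin (α j) / (ρ₀ / ρ j + 1 / (ρ₀ / ρ j) - 2 * Real.cos (α j)) := by
        rw [hc j, one_div_div]
        ring_nf
      have h2 : ρ j / r j = (ρ₀ / r₀) * ((r₀ / r j) / (ρ₀ / ρ j)) := by
        rw [div_div_div_eq, div_mul_div_comm,
          div_eq_div_iff (hr j).ne' (mul_ne_zero hr₀.ne' (mul_ne_zero (hr j).ne' hρ₀.ne'))]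
        ring
      rw [h1, h2]
      exact coeff_id ht hd'
    rw [ge_iff_le, ← sub_nonneg, Finset.mul_sum, ← Finset.sum_sub_distrib]
    calc (0:ℝ) ≤ (ρ₀ / r₀) * ∑ j, Real.sin (α j) /
          ((ρ₀ / ρ j) ^ 2 - 2 * (ρ₀ / ρ j) * Real.cos (α j) + 1) * (r₀ / r j - ρ₀ / ρ j) :=
        mul_nonneg (div_pos hρ₀ hr₀).le hcore
      _ = ∑ j, (c j * (ρ j / r j) - ρ₀ / r₀ * c j) := by
        rw [Finset.mul_sum]
        exact Finset.sum_congr rfl fun j _ => (key j).symm
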